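/- Let X be a complete operator system in a unital C*-algebra A and let L : X → [0,∞] be a Lipschitz seminorm. Suppose that for every ε > 0 there exist a complete operator system X_ε in a unital C*-algebra A_ε, a function L_ε : X_ε → [0,∞] satisfying L_ε(x+y) ≤ L_ε(x)+L_ε(y) and L_ε(λx) = |λ|·L_ε(x), and linear maps Φ_ε : X → X_ε and Ψ_ε : X_ε → X such that: (1) the kernel {y : L_ε(y)=0} is norm-closed and the image of {y ∈ X_ε : L_ε(y) ≤ 1} under the quotient map X_ε → X_ε/ker(L_ε) is totally bounded for the quotient norm; (2) Ψ_ε(ker L_ε) ⊆ ℂ·1; (3) there is a constant C > 0 with L_ε(Φ_ε(x)) ≤ C·L(x) for all x ∈ X and ‖Ψ_ε(y)‖ ≤ C·‖y‖ for all y ∈ X_ε; (4) ‖Ψ_ε(Φ_ε(x)) − x‖ ≤ ε·L(x) for all x ∈ X. Then the image of {x ∈ X : L(x) ≤ 1} under the quotient map X → X/ℂ·1 is totally bounded for the quotient norm (i.e., by Rieffel's criterion, (X,L) is a compact quantum metric space). -/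

import Mathlib

open scoped ENNReal

universe u v

/-- A bundled unital C*-algebra. -/
structure BundledCStarAlg : Type (v + 1) where
  carrier : Type v
  [inst : CStarAlgebra carrier]

attribute [instance] BundledCStarAlg.inst

/-- `L : X → [0,∞]` is a Lipschitz seminorm on the operator system `X`:  it is subadditive
and absolutely homogeneous on `X`, its domain `{x ∈ X : L x < ∞}` is norm-dense in `X`, its
kernel contains the scalars `ℂ·1`, and it is invariant under the adjoint operation. -/
def IsLipschitzSeminormOn {A : Type*} [CStarAlgebra A] (X : Submodule ℂ A)
    (L : A → ℝ≥0∞) : Prop :=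
  (∀ x ∈ X, ∀ y ∈ X, L (x + y) ≤ L x + L y) ∧
  (∀ (c : ℂ), ∀ x ∈ X, L (c • x) = (‖c‖₊ : ℝ≥0∞) * L x) ∧
  (∀ x ∈ X, x ∈ closure {y : A | y ∈ X ∧ L y < ⊤}) ∧
  (∀ c : ℂ, L (c • (1 : A)) = 0) ∧
  (∀ x ∈ X, L (star x) = L x)

/-- Theorem 2.6 of the paper: an approximation criterion ensuring that the image of the
`L`-unit ball of `X` under the quotient map `X → X/ℂ·1` is totally bounded for the quotient
norm, i.e. (by Rieffel's criterion) that `(X, L)` is a compact quantum metric space. -/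
theorem statement0 {A : Type u} [CStarAlgebra A] (X : Submodule ℂ A)
    (hXclosed : IsClosed (X : Set A)) (hXstar : ∀ x ∈ X, star x ∈ X) (hX1 : (1 : A) ∈ X)
    (L : A → ℝ≥0∞) (hL : IsLipschitzSeminormOn X L)
    (happrox : ∀ ε : ℝ, 0 < ε →
      ∃ (𝔅 : BundledCStarAlg.{v}) (Y : Submodule ℂ 𝔅.carrier)
        (Lε : 𝔅.carrier → ℝ≥0∞) (Φ : ↥X →ₗ[ℂ] ↥Y) (Ψ : ↥Y →ₗ[ℂ] ↥X),
        -- `Y` is a complete operator system in the unital C*-algebra `𝔅.carrier`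
        IsClosed (Y : Set 𝔅.carrier) ∧ (∀ y ∈ Y, star y ∈ Y) ∧ (1 : 𝔅.carrier) ∈ Y ∧
        -- `Lε` is subadditive and absolutely homogeneous on `Y`
        (∀ x ∈ Y, ∀ y ∈ Y, Lε (x + y) ≤ Lε x + Lε y) ∧
        (∀ (c : ℂ), ∀ x ∈ Y, Lε (c • x) = (‖c‖₊ : ℝ≥0∞) * Lε x) ∧
        -- (1) the kernel of `Lε` is norm-closed, and the image of the `Lε`-unit ball of `Y`
        -- in the quotient `Y/ker(Lε)` is totally bounded for the quotient norm
        IsClosed {y : 𝔅.carrier | y ∈ Y ∧ Lε y = 0} ∧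
        (∀ r : ℝ, 0 < r → ∃ F : Finset 𝔅.carrier,
          (↑F : Set 𝔅.carrier) ⊆ (Y : Set 𝔅.carrier) ∧
          ∀ y ∈ Y, Lε y ≤ 1 → ∃ z ∈ F, ∃ v, v ∈ Y ∧ Lε v = 0 ∧ ‖y - z - v‖ < r) ∧
        -- (2) `Ψ` maps the kernel of `Lε` into `ℂ·1`
        (∀ y : ↥Y, Lε (y : 𝔅.carrier) = 0 → ∃ c : ℂ, ((Ψ y : ↥X) : A) = c • (1 : A)) ∧
        -- (3) `Φ` is bounded for the seminorms and `Ψ` is bounded for the norms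
        (∃ C : ℝ, 0 < C ∧
          (∀ x : ↥X, Lε ((Φ x : ↥Y) : 𝔅.carrier) ≤ ENNReal.ofReal C * L (x : A)) ∧
          (∀ y : ↥Y, ‖((Ψ y : ↥X) : A)‖ ≤ C * ‖(y : 𝔅.carrier)‖)) ∧
        -- (4) `‖Ψ(Φ(x)) − x‖ ≤ ε·L(x)` for all `x ∈ X`
        (∀ x : ↥X,
          (‖((Ψ (Φ x) : ↥X) : A) - (x : A)‖₊ : ℝ≥0∞) ≤ ENNReal.ofReal ε * L (x : A))) :
    ∀ r : ℝ, 0 < r → ∃ F : Finset A, (↑F : Set A) ⊆ (X : Set A) ∧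
      ∀ x ∈ X, L x ≤ 1 → ∃ y ∈ F, ∃ c : ℂ, ‖x - y - c • (1 : A)‖ < r := by
  classical
  intro r hr
  obtain ⟨𝔅, Y, Lε, Φ, Ψ, hYclosed, hYstar, hY1, hsub, hhom, hker, hTB,
      hΨker, ⟨C, hC, hΦ, hΨ⟩, happ⟩ := happrox (r / 2) (by linarith)
  set CN : NNReal := ⟨C, hC.le⟩ with hCN
  have hCNne : CN ≠ 0 := fun h => hC.ne' (by have := congrArg NNReal.toReal h; simp [hCN] at this; exact this)
  have hCne : (C : ℂ) ≠ 0 := by exact_mod_cast hC.ne'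
  have hnnC : ‖(C : ℂ)‖₊ = CN := by
    rw [Complex.nnnorm_real]
    ext
    simp [Real.nnnorm_of_nonneg hC.le, hCN]
    rfl
  obtain ⟨F', hF'sub, hF'⟩ := hTB (r / (2 * C ^ 2)) (by positivity)
  refine ⟨F'.attach.image (fun z => (C : ℂ) • ((Ψ ⟨z.1, hF'sub z.2⟩ : ↥X) : A)), ?_, ?_⟩
  · intro a ha
    simp only [Finset.coe_image, Set.mem_image] at ha
    obtain ⟨z, _, rfl⟩ := ha
    exact X.smul_mem _ (Ψ _).2
  · intro x hx hLx
    set xX : ↥X := ⟨x, hx⟩ with hxX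
    have hΦx : Lε ((Φ xX : ↥Y) : 𝔅.carrier) ≤ (CN : ℝ≥0∞) := by
      calc Lε ((Φ xX : ↥Y) : 𝔅.carrier) ≤ ENNReal.ofReal C * L x := hΦ xX
        _ ≤ ENNReal.ofReal C * 1 := by gcongr
        _ = (CN : ℝ≥0∞) := by rw [mul_one, ENNReal.ofReal_eq_coe_nnreal hC.le]; rfl
    set y0 : ↥Y := ((C : ℂ)⁻¹) • Φ xX with hy0
    have hy0coe : (y0 : 𝔅.carrier) = ((C : ℂ)⁻¹) • ((Φ xX : ↥Y) : 𝔅.carrier) := rfl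
    have hy0L : Lε (y0 : 𝔅.carrier) ≤ 1 := by
      rw [hy0coe, hhom ((C : ℂ)⁻¹) _ (Φ xX).2, nnnorm_inv, hnnC]
      calc ((CN⁻¹ : NNReal) : ℝ≥0∞) * Lε ((Φ xX : ↥Y) : 𝔅.carrier)
          ≤ (CN⁻¹ : NNReal) * (CN : ℝ≥0∞) := by gcongr
        _ = ((CN⁻¹ * CN : NNReal) : ℝ≥0∞) := by rw [ENNReal.coe_mul]
        _ = 1 := by rw [inv_mul_cancel₀ hCNne, ENNReal.coe_one]
    obtain ⟨z, hzF, v, hvY, hv0, hdist⟩ := hF' (y0 : 𝔅.carrier) y0.2 hy0L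
    set zY : ↥Y := ⟨z, hF'sub hzF⟩ with hzY
    set vY : ↥Y := ⟨v, hvY⟩ with hvYdef
    obtain ⟨c0, hc0⟩ := hΨker vY hv0
    refine ⟨(C : ℂ) • ((Ψ zY : ↥X) : A), ?_, C * c0, ?_⟩
    · exact Finset.mem_image.mpr ⟨⟨z, hzF⟩, Finset.mem_attach _ _, rfl⟩
    · -- key algebraic identity
      have hCy0 : (C : ℂ) • y0 = Φ xX := by
        rw [hy0, smul_inv_smul₀ hCne]
      have hid : x - (C : ℂ) • ((Ψ zY : ↥X) : A) - ((C : ℂ) * c0) • (1 : A)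
          = (x - ((Ψ (Φ xX) : ↥X) : A))
            + (C : ℂ) • ((Ψ (y0 - zY - vY) : ↥X) : A) := by
        have : Ψ (y0 - zY - vY) = Ψ y0 - Ψ zY - Ψ vY := by
          simp [map_sub]
        rw [this]
        have hΨy0 : (C : ℂ) • ((Ψ y0 : ↥X) : A) = ((Ψ (Φ xX) : ↥X) : A) := by
          have h9 : ((Ψ y0 : ↥X) : A) = (C : ℂ)⁻¹ • ((Ψ (Φ xX) : ↥X) : A) := by
            rw [hy0, map_smul]
            rfl
          rw [h9, smul_inv_smul₀ hCne]
        push_cast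
        rw [smul_sub, smul_sub, hΨy0, hc0, smul_smul]
        ring_nf
        abel
      rw [hid]
      have h1 : ‖x - ((Ψ (Φ xX) : ↥X) : A)‖ ≤ r / 2 := by
        have := happ xX
        have h2 : (‖((Ψ (Φ xX) : ↥X) : A) - x‖₊ : ℝ≥0∞) ≤ ENNReal.ofReal (r / 2) := by
          calc (‖((Ψ (Φ xX) : ↥X) : A) - x‖₊ : ℝ≥0∞)
              ≤ ENNReal.ofReal (r / 2) * L x := this
            _ ≤ ENNReal.ofReal (r / 2) * 1 := by gcongr
            _ = ENNReal.ofReal (r / 2) := mul_one _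
        rw [← enorm_eq_nnnorm, ← ofReal_norm,
          ENNReal.ofReal_le_ofReal_iff (by linarith)] at h2
        rw [← norm_neg]
        simpa using h2
      have h2 : ‖(C : ℂ) • ((Ψ (y0 - zY - vY) : ↥X) : A)‖ < r / 2 := by
        rw [norm_smul]
        have hcoe : ((y0 - zY - vY : ↥Y) : 𝔅.carrier) = (y0 : 𝔅.carrier) - z - v := by
          push_cast
          rfl
        have hb : ‖((Ψ (y0 - zY - vY) : ↥X) : A)‖
            ≤ C * ‖(y0 : 𝔅.carrier) - z - v‖ := by
          simpa [hcoe] using hΨ (y0 - zY - vY)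
        have hnC : ‖(C : ℂ)‖ = C := by
          rw [Complex.norm_real, Real.norm_of_nonneg hC.le]
        rw [hnC]
        calc C * ‖((Ψ (y0 - zY - vY) : ↥X) : A)‖
            ≤ C * (C * ‖(y0 : 𝔅.carrier) - z - v‖) := by
              exact mul_le_mul_of_nonneg_left hb hC.le
          _ < C * (C * (r / (2 * C ^ 2))) := by
              apply mul_lt_mul_of_pos_left _ hC
              exact mul_lt_mul_of_pos_left hdist hC
          _ = r / 2 := by field_simp
      calc ‖(x - ((Ψ (Φ xX) : ↥X) : A))
            + (C : ℂ) • ((Ψ (y0 - zY - vY) : ↥X) : A)‖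
          ≤ ‖x - ((Ψ (Φ xX) : ↥X) : A)‖
            + ‖(C : ℂ) • ((Ψ (y0 - zY - vY) : ↥X) : A)‖ := norm_add_le _ _
        _ < r / 2 + r / 2 := by
            apply add_lt_add_of_le_of_lt h1 h2
        _ = r := by ring
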